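/- Let D ⊂ ℝ^d be a bounded measurable set, let G satisfy the Gaussian property with constants c₁, c₂, let f : ℝ → ℝ satisfy |f(u)| ≤ L(1+|u|), and let u be measurable with u(·,z) ∈ L²(D) for each z. Then for all 0 ≤ v < s ≤ T, ‖ ∫_v^s ∫_D G(·,s;y,z) f(u(y,z)) dy dz ‖₂ ≤ C (s−v)^{1/2} ( ∫_v^s (1 + ‖u(·,z)‖₂²) dz )^{1/2}, where C depends only on c₁, c₂, d, L and the Lebesgue measure of D. -/

import Mathlib

open MeasureTheory Real Set
open scoped ENNReal NNReal

noncomputable section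

/-- Euclidean space `ℝ^d`. -/
abbrev Euc (d : ℕ) : Type := EuclideanSpace ℝ (Fin d)

/-- The Gaussian heat-kernel bound `r^{-d/2} exp(-c₂ |x-y|² / r)`. -/
def gaussKer (d : ℕ) (c₂ r : ℝ) (x y : Euc d) : ℝ :=
  r ^ (-(d : ℝ) / 2) * Real.exp (-c₂ * ‖x - y‖ ^ 2 / r)

/-- `G` satisfies the Gaussian property with constants `c₁, c₂` on `D × [0,T]`. -/
def GaussianProperty {d : ℕ} (D : Set (Euc d)) (T c₁ c₂ : ℝ)
    (G : Euc d → ℝ → Euc d → ℝ → ℝ) : Prop :=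
  ∀ x ∈ D, ∀ y ∈ D, ∀ s t : ℝ, 0 ≤ s → s < t → t ≤ T →
    |G x t y s| ≤ c₁ * gaussKer d c₂ (t - s) x y

/-- Second-variable difference estimate with exponent `δ`. -/
def SecondVarDiff {d : ℕ} (D : Set (Euc d)) (T c₂ δ : ℝ)
    (G : Euc d → ℝ → Euc d → ℝ → ℝ) : Prop :=
  ∀ x ∈ D, ∀ y ∈ D, ∀ r v t : ℝ, 0 < r → r < v → v < t → t ≤ T →
    ∃ ts ∈ Ioo r v,
      |G x t y v - G x t y r| ≤ (t - v) ^ (-δ) * (v - r) ^ δ * gaussKer d c₂ (t - ts) x y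

/-- First-variable difference estimate with exponent `δ`. -/
def FirstVarDiff {d : ℕ} (D : Set (Euc d)) (T c₂ δ : ℝ)
    (G : Euc d → ℝ → Euc d → ℝ → ℝ) : Prop :=
  ∀ x ∈ D, ∀ y ∈ D, ∀ v s t : ℝ, 0 ≤ v → v < s → s < t → t ≤ T →
    ∃ vs ∈ Ioo s t,
      |G x t y v - G x s y v| ≤ (t - s) ^ δ * (s - v) ^ (-δ) * gaussKer d c₂ (vs - v) x y

/-- Mixed second-difference estimate with exponent `δ`. -/
def MixedDiff {d : ℕ} (D : Set (Euc d)) (T c₂ δ : ℝ)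
    (G : Euc d → ℝ → Euc d → ℝ → ℝ) : Prop :=
  ∀ x ∈ D, ∀ y ∈ D, ∀ r v s t : ℝ, 0 < r → r < v → v < s → s < t → t ≤ T →
    ∃ vs ∈ Ioo s t, ∃ rs ∈ Ioo s t,
      |G x t y v - G x s y v - G x t y r + G x s y r| ≤
        (t - s) ^ δ * (s - v)⁻¹ * (v - r) ^ (1 - δ) *
          (gaussKer d c₂ (vs - v) x y + gaussKer d c₂ (rs - r) x y)

/-- The `L²(D)` norm (with values in `[0,∞]`). -/
def L2N {d : ℕ} (D : Set (Euc d)) (f : Euc d → ℝ) : ℝ≥0∞ :=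
  eLpNorm f 2 (volume.restrict D)

/-- The Hölder-type seminorm `‖f‖_{α,0;t}` (with values in `[0,∞]`). -/
def hsem (α t : ℝ) (f : ℝ → ℝ) : ℝ≥0∞ :=
  ⨆ (u : ℝ) (v : ℝ) (_ : 0 ≤ u) (_ : u < v) (_ : v < t),
    (ENNReal.ofReal (|f v - f u| / (v - u) ^ (1 - α)) +
      ∫⁻ z in Ioo u v, ENNReal.ofReal (|f u - f z| / (z - u) ^ (2 - α)))

/-- The Riemann–Liouville left-sided fractional derivative `D^α_{a+} F`. -/
def RLplus (α a : ℝ) (F : ℝ → ℝ) (s : ℝ) : ℝ :=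
  (Real.Gamma (1 - α))⁻¹ *
    (F s / (s - a) ^ α + α * ∫ v in Ioo a s, (F s - F v) / (s - v) ^ (α + 1))

/-- The Riemann–Liouville right-sided fractional derivative `D^{1-α}_{b-} g_{b-}`
(of the function `g_{b-}(x) = g(b) - g(x)`). -/
def RLminus (α b : ℝ) (g : ℝ → ℝ) (s : ℝ) : ℝ :=
  (Real.Gamma α)⁻¹ *
    ((g b - g s) / (b - s) ^ (1 - α) +
      (1 - α) * ∫ y in Ioo s b, (g y - g s) / (y - s) ^ (2 - α))

/-- The (pointwise, real-valued) generalized Lebesgue–Stieltjes integral `∫_a^b F dg`. -/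
def glsIntegral (α a b : ℝ) (F g : ℝ → ℝ) : ℝ :=
  ∫ s in Ioc a b, RLplus α a F s * RLminus α b g s

/-- The square of the norm `‖u‖_{α,2,t}` of `𝓑^{α,2}(0,t;L²(D))` (with values in `[0,∞]`). -/
def wnormSq {d : ℕ} (D : Set (Euc d)) (α t : ℝ) (u : ℝ → Euc d → ℝ) : ℝ≥0∞ :=
  (⨆ s ∈ Icc (0 : ℝ) t, L2N D (u s)) ^ 2 +
    ∫⁻ s in Ioc (0 : ℝ) t,
      (∫⁻ v in Ioo (0 : ℝ) s, L2N D (u s - u v) * ENNReal.ofReal ((s - v) ^ (-α - 1))) ^ 2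

/-- The kernel `a_{j,t}(u)(x,s) = ∫_D G(x,t;y,s) h(u(y,s)) e(y) dy` with `h(z) = p z + q`. -/
def aKer {d : ℕ} (D : Set (Euc d)) (G : Euc d → ℝ → Euc d → ℝ → ℝ) (p q : ℝ)
    (u : ℝ → Euc d → ℝ) (e : Euc d → ℝ) (t : ℝ) (x : Euc d) (s : ℝ) : ℝ :=
  ∫ y in D, G x t y s * (p * u s y + q) * e y

/-- `I_h(x,t) = Σ_j μ_j^{1/2} ∫_0^t a_{j,t}(u)(x,s) dZ_j(s)` (pointwise in `x`). -/
def Ihat {d : ℕ} (D : Set (Euc d)) (G : Euc d → ℝ → Euc d → ℝ → ℝ) (p q : ℝ)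
    (u : ℝ → Euc d → ℝ) (e : ℕ → Euc d → ℝ) (μ : ℕ → ℝ) (Z : ℕ → ℝ → ℝ)
    (α t : ℝ) (x : Euc d) : ℝ :=
  ∑' j, Real.sqrt (μ j) * glsIntegral α 0 t (fun s => aKer D G p q u (e j) t x s) (Z j)

end

section Aux

open scoped RealInnerProductSpace

lemma gaussKer_nonneg {d : ℕ} {c₂ r : ℝ} (hr : 0 ≤ r) (x y : Euc d) :
    0 ≤ gaussKer d c₂ r x y :=
  mul_nonneg (Real.rpow_nonneg hr _) (Real.exp_nonneg _)

lemma gaussKer_symm {d : ℕ} (c₂ r : ℝ) (x y : Euc d) :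
    gaussKer d c₂ r x y = gaussKer d c₂ r y x := by
  unfold gaussKer; rw [norm_sub_rev]

lemma integrable_gauss_exp {d : ℕ} {b : ℝ} (hb : 0 < b) :
    Integrable (fun v : Euc d => Real.exp (-b * ‖v‖ ^ 2)) := by
  have h0 := (GaussianFourier.integrable_cexp_neg_mul_sq_norm_add (V := Euc d)
    (b := (b : ℂ)) (by simpa using hb) 0 (0 : Euc d)).norm
  refine h0.congr (Filter.Eventually.of_forall fun v => ?_)
  dsimp only
  have h1 : (-(b : ℂ) * (‖v‖ : ℂ) ^ 2 + 0 * (⟪(0 : Euc d), v⟫ : ℂ))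
      = ((-b * ‖v‖ ^ 2 : ℝ) : ℂ) := by push_cast; ring
  rw [h1, Complex.norm_exp, Complex.ofReal_re]

lemma measurable_gaussKer {d : ℕ} (c₂ s : ℝ) :
    Measurable (fun q : Euc d × ℝ × Euc d =>
      gaussKer d c₂ (s - q.2.1) q.1 q.2.2) := by
  unfold gaussKer
  have h1 : Measurable (fun q : Euc d × ℝ × Euc d => s - q.2.1) :=
    measurable_const.sub (measurable_snd.fst)
  have h2 : Measurable (fun q : Euc d × ℝ × Euc d => ‖q.1 - q.2.2‖ ^ 2) :=
    (measurable_fst.sub measurable_snd.snd).norm.pow_const 2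
  exact (h1.pow measurable_const).mul
    (Real.measurable_exp.comp ((measurable_const.mul h2).div h1))

lemma lintegral_gaussKer_le {d : ℕ} (D : Set (Euc d)) {c₂ r : ℝ} (hc₂ : 0 < c₂) (hr : 0 < r)
    (x : Euc d) :
    ∫⁻ y in D, ENNReal.ofReal (gaussKer d c₂ r x y) ≤
      ENNReal.ofReal ((π / c₂) ^ ((d : ℝ) / 2)) := by
  have hb : 0 < c₂ / r := div_pos hc₂ hr
  have hint : Integrable (fun y : Euc d => Real.exp (-(c₂ / r) * ‖y‖ ^ 2)) :=
    integrable_gauss_exp hb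
  have hint2 : Integrable
      (fun y : Euc d => r ^ (-(d : ℝ) / 2) * Real.exp (-(c₂ / r) * ‖(-x) + y‖ ^ 2)) :=
    (hint.comp_add_left (-x)).const_mul _
  have hker : ∀ y : Euc d, gaussKer d c₂ r x y
      = r ^ (-(d : ℝ) / 2) * Real.exp (-(c₂ / r) * ‖(-x) + y‖ ^ 2) := by
    intro y
    unfold gaussKer
    have hn : ‖(-x) + y‖ = ‖x - y‖ := by rw [neg_add_eq_sub, norm_sub_rev]
    rw [hn]
    congr 1
    field_simp
  calc ∫⁻ y in D, ENNReal.ofReal (gaussKer d c₂ r x y)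
      ≤ ∫⁻ y, ENNReal.ofReal (gaussKer d c₂ r x y) := setLIntegral_le_lintegral _ _
    _ = ENNReal.ofReal (∫ y : Euc d,
          r ^ (-(d : ℝ) / 2) * Real.exp (-(c₂ / r) * ‖(-x) + y‖ ^ 2)) := by
        simp_rw [hker]
        rw [← ofReal_integral_eq_lintegral_ofReal hint2
          (Filter.Eventually.of_forall fun y => by positivity)]
    _ = ENNReal.ofReal ((π / c₂) ^ ((d : ℝ) / 2)) := by
        congr 1
        rw [integral_const_mul, integral_add_left_eq_self
          (fun v : Euc d => Real.exp (-(c₂ / r) * ‖v‖ ^ 2)) (-x),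
          GaussianFourier.integral_rexp_neg_mul_sq_norm hb, finrank_euclideanSpace_fin]
        have h1 : π / (c₂ / r) = (π / c₂) * r := by field_simp
        rw [h1, Real.mul_rpow (by positivity) hr.le, ← mul_assoc,
          mul_comm (r ^ (-(d : ℝ) / 2)) ((π / c₂) ^ ((d : ℝ) / 2)), mul_assoc,
          ← Real.rpow_add hr, neg_div, neg_add_cancel, Real.rpow_zero, mul_one]

lemma lintegral_cs {α : Type*} [MeasurableSpace α] (μ : Measure α) {f g : α → ℝ≥0∞}
    (hf : AEMeasurable f μ) (hg : AEMeasurable g μ) :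
    ∫⁻ a, f a * g a ∂μ ≤
      (∫⁻ a, f a ∂μ) ^ (1 / 2 : ℝ) * (∫⁻ a, f a * g a ^ (2 : ℝ) ∂μ) ^ (1 / 2 : ℝ) := by
  have h2 : (2 : ℝ).HolderConjugate 2 := Real.HolderConjugate.two_two
  have hF : AEMeasurable (fun a => f a ^ (1 / 2 : ℝ)) μ := hf.pow_const _
  have hG : AEMeasurable (fun a => f a ^ (1 / 2 : ℝ) * g a) μ := hF.mul hg
  have key := ENNReal.lintegral_mul_le_Lp_mul_Lq μ h2 hF hG
  have e1 : ∀ a, f a ^ (1 / 2 : ℝ) * (f a ^ (1 / 2 : ℝ) * g a) = f a * g a := by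
    intro a
    rw [← mul_assoc, ← ENNReal.rpow_add_of_nonneg _ _ (by norm_num) (by norm_num)]
    norm_num
  have e2 : ∀ a, (f a ^ (1 / 2 : ℝ)) ^ (2 : ℝ) = f a := by
    intro a
    rw [← ENNReal.rpow_mul]
    norm_num
  have e3 : ∀ a, (f a ^ (1 / 2 : ℝ) * g a) ^ (2 : ℝ) = f a * g a ^ (2 : ℝ) := by
    intro a
    rw [ENNReal.mul_rpow_of_nonneg _ _ (by norm_num : (0:ℝ) ≤ 2), e2]
  calc ∫⁻ a, f a * g a ∂μ
      = ∫⁻ a, ((fun a => f a ^ (1 / 2 : ℝ)) * fun a => f a ^ (1 / 2 : ℝ) * g a) a ∂μ := by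
        simp only [Pi.mul_apply]
        exact lintegral_congr fun a => (e1 a).symm
    _ ≤ (∫⁻ a, (f a ^ (1 / 2 : ℝ)) ^ (2 : ℝ) ∂μ) ^ (1 / 2 : ℝ) *
          (∫⁻ a, (f a ^ (1 / 2 : ℝ) * g a) ^ (2 : ℝ) ∂μ) ^ (1 / 2 : ℝ) := key
    _ = _ := by
        simp_rw [e2, e3]

end Aux

set_option maxHeartbeats 2000000 in
/-- the bound for `K'_f(·,s,v)`. -/
theorem stmt_8 (d : ℕ) (D : Set (Euc d)) (hD : Bornology.IsBounded D)
    (hDm : MeasurableSet D) (T c₁ c₂ L : ℝ)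
    (hc₁ : 0 < c₁) (hc₂ : 0 < c₂) (hL : 0 < L) :
    ∃ C : ℝ, 0 < C ∧
      ∀ G : Euc d → ℝ → Euc d → ℝ → ℝ, GaussianProperty D T c₁ c₂ G →
      ∀ f : ℝ → ℝ, (∀ z : ℝ, |f z| ≤ L * (1 + |z|)) →
      ∀ u : ℝ → Euc d → ℝ, Measurable (Function.uncurry u) →
        (∀ z : ℝ, MemLp (u z) 2 (volume.restrict D)) →
      ∀ v s : ℝ, 0 ≤ v → v < s → s ≤ T →
        L2N D (fun x => ∫ z in Ioc v s, ∫ y in D, G x s y z * f (u z y)) ≤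
          ENNReal.ofReal (C * (s - v) ^ (1 / 2 : ℝ)) *
            (∫⁻ z in Ioc v s, (1 + L2N D (u z) ^ 2)) ^ (1 / 2 : ℝ) := by
  classical
  set Kr : ℝ := c₁ * (π / c₂) ^ ((d : ℝ) / 2) with hKrdef
  have hKr : 0 < Kr := mul_pos hc₁ (Real.rpow_pos_of_pos (div_pos pi_pos hc₂) _)
  have hDfin : volume D < ⊤ := hD.measure_lt_top
  set M : ℝ := max (volume D).toReal 1 with hMdef
  have hM1 : (1 : ℝ) ≤ M := le_max_right _ _
  have hM0 : (0 : ℝ) < M := lt_of_lt_of_le one_pos hM1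
  refine ⟨Kr * Real.sqrt (2 * L ^ 2 * M), by positivity, ?_⟩
  intro G hG f hf u hu hu2 v s hv hvs hsT
  have hsv : (0 : ℝ) ≤ s - v := sub_nonneg.2 hvs.le
  set K0 : ℝ≥0∞ := ENNReal.ofReal Kr with hK0def
  have hK0top : K0 ≠ ⊤ := ENNReal.ofReal_ne_top
  have hDM : volume D ≤ ENNReal.ofReal M := by
    rw [← ENNReal.ofReal_toReal hDfin.ne]
    exact ENNReal.ofReal_le_ofReal (le_max_left _ _)
  set μp := (volume.restrict (Ioo v s)).prod (volume.restrict D) with hμpdef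
  set Kf : Euc d → ℝ × Euc d → ℝ≥0∞ :=
    fun x p => ENNReal.ofReal (c₁ * gaussKer d c₂ (s - p.1) x p.2) with hKfdef
  set W : ℝ × Euc d → ℝ≥0∞ := fun p => ENNReal.ofReal (L * (1 + |u p.1 p.2|)) with hWdef
  have hKm : Measurable (fun q : Euc d × ℝ × Euc d => Kf q.1 q.2) :=
    (measurable_const.mul (measurable_gaussKer c₂ s)).ennreal_ofReal
  have hKmx : ∀ x : Euc d, Measurable (fun p : ℝ × Euc d => Kf x p) := fun x =>
    hKm.comp measurable_prodMk_left
  have hWm : Measurable W :=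
    (measurable_const.mul (measurable_const.add hu.abs)).ennreal_ofReal
  have hIoo : volume.restrict (Ioo v s) = volume.restrict (Ioc v s) :=
    Measure.restrict_congr_set Ioo_ae_eq_Ioc
  -- row and column bounds for the kernel
  have hrow : ∀ (x : Euc d), ∀ z ∈ Ioo v s, ∫⁻ y in D, Kf x (z, y) ≤ K0 := by
    intro x z hz
    have hr : 0 < s - z := sub_pos.2 hz.2
    calc ∫⁻ y in D, Kf x (z, y)
        = ∫⁻ y in D, ENNReal.ofReal c₁ * ENNReal.ofReal (gaussKer d c₂ (s - z) x y) := by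
          rw [hKfdef]
          simp_rw [ENNReal.ofReal_mul hc₁.le]
      _ = ENNReal.ofReal c₁ * ∫⁻ y in D, ENNReal.ofReal (gaussKer d c₂ (s - z) x y) :=
          lintegral_const_mul' _ _ ENNReal.ofReal_ne_top
      _ ≤ ENNReal.ofReal c₁ * ENNReal.ofReal ((π / c₂) ^ ((d : ℝ) / 2)) :=
          mul_le_mul_right (lintegral_gaussKer_le D hc₂ hr x) _
      _ = K0 := by rw [hK0def, hKrdef, ENNReal.ofReal_mul hc₁.le]
  have hcol : ∀ (y : Euc d), ∀ z ∈ Ioo v s, ∫⁻ x in D, Kf x (z, y) ≤ K0 := by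
    intro y z hz
    have hsymm : ∀ x : Euc d, Kf x (z, y) = Kf y (z, x) := by
      intro x; rw [hKfdef]; dsimp only; rw [gaussKer_symm]
    simp_rw [hsymm]
    exact hrow y z hz
  -- the per-time-slice L² bound for the nonlinearity
  have hW2 : ∀ z : ℝ, ∫⁻ y in D, W (z, y) ^ (2 : ℝ)
      ≤ ENNReal.ofReal (2 * L ^ 2 * M) * (1 + L2N D (u z) ^ 2) := by
    intro z
    have hL2 : L2N D (u z) ^ 2 = ∫⁻ y in D, ENNReal.ofReal ((u z y) ^ 2) := by
      have h1 : ∀ y : Euc d, ((‖u z y‖₊ : ℝ≥0∞)) ^ (2 : ℝ) = ENNReal.ofReal ((u z y) ^ 2) := by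
        intro y
        rw [← enorm_eq_nnnorm, Real.enorm_eq_ofReal_abs, ENNReal.ofReal_rpow_of_nonneg (abs_nonneg _)
          (by norm_num)]
        congr 1
        rw [show (2 : ℝ) = ((2 : ℕ) : ℝ) by norm_num, Real.rpow_natCast, sq_abs]
      have hX : L2N D (u z)
          = (∫⁻ y in D, ENNReal.ofReal ((u z y) ^ 2)) ^ (1 / 2 : ℝ) := by
        rw [show L2N D (u z) = eLpNorm (u z) 2 (volume.restrict D) from rfl,
          eLpNorm_eq_lintegral_rpow_enorm_toReal (by norm_num) (by norm_num)]
        simp only [ENNReal.toReal_ofNat]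
        congr 1
        exact lintegral_congr fun y => h1 y
      rw [hX, ← ENNReal.rpow_natCast _ 2, ← ENNReal.rpow_mul]
      norm_num
    calc ∫⁻ y in D, W (z, y) ^ (2 : ℝ)
        ≤ ∫⁻ y in D, ENNReal.ofReal (2 * L ^ 2) * (1 + ENNReal.ofReal ((u z y) ^ 2)) := by
          refine lintegral_mono fun y => ?_
          have h0 : (0 : ℝ) ≤ L * (1 + |u z y|) := by positivity
          rw [hWdef]
          dsimp only
          rw [ENNReal.ofReal_rpow_of_nonneg h0 (by norm_num)]
          rw [show ((L * (1 + |u z y|)) ^ (2 : ℝ)) = (L * (1 + |u z y|)) ^ 2 from by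
            rw [show (2 : ℝ) = ((2 : ℕ) : ℝ) by norm_num, Real.rpow_natCast]]
          calc ENNReal.ofReal ((L * (1 + |u z y|)) ^ 2)
              ≤ ENNReal.ofReal (2 * L ^ 2 * (1 + (u z y) ^ 2)) := by
                apply ENNReal.ofReal_le_ofReal
                nlinarith [sq_abs (u z y), sq_nonneg (1 - |u z y|), abs_nonneg (u z y),
                  sq_nonneg (u z y), sq_nonneg L, hL.le]
            _ = ENNReal.ofReal (2 * L ^ 2) * (1 + ENNReal.ofReal ((u z y) ^ 2)) := by
                rw [ENNReal.ofReal_mul (by positivity),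
                  ENNReal.ofReal_add one_pos.le (sq_nonneg _), ENNReal.ofReal_one]
      _ = ENNReal.ofReal (2 * L ^ 2) * (volume D + L2N D (u z) ^ 2) := by
          rw [lintegral_const_mul' _ _ ENNReal.ofReal_ne_top,
            lintegral_add_left measurable_const, lintegral_one, Measure.restrict_apply_univ, hL2]
      _ ≤ ENNReal.ofReal (2 * L ^ 2) * (ENNReal.ofReal M * (1 + L2N D (u z) ^ 2)) := by
          apply mul_le_mul_right
          rw [mul_add, mul_one]
          refine add_le_add hDM ?_
          refine le_mul_of_one_le_left (zero_le (a := L2N D (u z) ^ 2)) ?_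
          rw [← ENNReal.ofReal_one]
          exact ENNReal.ofReal_le_ofReal hM1
      _ = ENNReal.ofReal (2 * L ^ 2 * M) * (1 + L2N D (u z) ^ 2) := by
          rw [← mul_assoc, ← ENNReal.ofReal_mul (by positivity)]
  -- pointwise bound on the inner double integral
  have hptw : ∀ x ∈ D,
      (‖∫ z in Ioc v s, ∫ y in D, G x s y z * f (u z y)‖₊ : ℝ≥0∞)
        ≤ ∫⁻ p, Kf x p * W p ∂μp := by
    intro x hx
    have h3 : ∀ z ∈ Ioo v s, (‖∫ y in D, G x s y z * f (u z y)‖₊ : ℝ≥0∞)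
        ≤ ∫⁻ y in D, Kf x (z, y) * W (z, y) := by
      intro z hz
      refine le_trans (enorm_integral_le_lintegral_enorm _) ?_
      refine lintegral_mono_ae ((ae_restrict_iff' hDm).2
        (Filter.Eventually.of_forall fun y hy => ?_))
      have hgb := hG x hx y hy z s (le_trans hv hz.1.le) hz.2 hsT
      have hfb := hf (u z y)
      have hg0 : 0 ≤ c₁ * gaussKer d c₂ (s - z) x y :=
        mul_nonneg hc₁.le (gaussKer_nonneg (sub_nonneg.2 hz.2.le) x y)
      rw [Real.enorm_eq_ofReal_abs, abs_mul]
      calc ENNReal.ofReal (|G x s y z| * |f (u z y)|)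
          ≤ ENNReal.ofReal ((c₁ * gaussKer d c₂ (s - z) x y) * (L * (1 + |u z y|))) :=
            ENNReal.ofReal_le_ofReal (mul_le_mul hgb hfb (abs_nonneg _) hg0)
        _ = Kf x (z, y) * W (z, y) := by
            rw [hKfdef, hWdef]; exact ENNReal.ofReal_mul hg0
    calc (‖∫ z in Ioc v s, ∫ y in D, G x s y z * f (u z y)‖₊ : ℝ≥0∞)
        ≤ ∫⁻ z in Ioc v s, (‖∫ y in D, G x s y z * f (u z y)‖₊ : ℝ≥0∞) :=
          enorm_integral_le_lintegral_enorm _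
      _ = ∫⁻ z in Ioo v s, (‖∫ y in D, G x s y z * f (u z y)‖₊ : ℝ≥0∞) := by rw [hIoo]
      _ ≤ ∫⁻ z in Ioo v s, ∫⁻ y in D, Kf x (z, y) * W (z, y) :=
          lintegral_mono_ae ((ae_restrict_iff' measurableSet_Ioo).2
            (Filter.Eventually.of_forall h3))
      _ = ∫⁻ p, Kf x p * W p ∂μp := by
          rw [hμpdef]
          exact (lintegral_prod _ ((hKmx x).mul hWm).aemeasurable).symm
  -- total mass of the kernel
  have hA : ∀ x : Euc d, ∫⁻ p, Kf x p ∂μp ≤ K0 * ENNReal.ofReal (s - v) := by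
    intro x
    rw [hμpdef, lintegral_prod _ (hKmx x).aemeasurable]
    calc ∫⁻ z in Ioo v s, ∫⁻ y in D, Kf x (z, y)
        ≤ ∫⁻ _ in Ioo v s, K0 :=
          lintegral_mono_ae ((ae_restrict_iff' measurableSet_Ioo).2
            (Filter.Eventually.of_forall fun z hz => hrow x z hz))
      _ = K0 * ENNReal.ofReal (s - v) := by rw [setLIntegral_const, Real.volume_Ioo]
  set S : ℝ≥0∞ := ∫⁻ z in Ioc v s, (1 + L2N D (u z) ^ 2) with hSdef
  -- bound on the second factor
  have hB : ∫⁻ x in D, (∫⁻ p, Kf x p * W p ^ (2 : ℝ) ∂μp)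
      ≤ K0 * (ENNReal.ofReal (2 * L ^ 2 * M) * S) := by
    have hswap : ∫⁻ x in D, (∫⁻ p, Kf x p * W p ^ (2 : ℝ) ∂μp)
        = ∫⁻ p, (∫⁻ x in D, Kf x p * W p ^ (2 : ℝ)) ∂μp :=
      lintegral_lintegral_swap
        ((hKm.mul ((hWm.comp measurable_snd).pow measurable_const)).aemeasurable)
    rw [hswap]
    have hae : ∀ᵐ p ∂μp, p.1 ∈ Ioo v s := by
      rw [hμpdef, Measure.prod_restrict]
      exact Filter.Eventually.mono (ae_restrict_mem (measurableSet_Ioo.prod hDm))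
        fun p hp => hp.1
    calc ∫⁻ p, (∫⁻ x in D, Kf x p * W p ^ (2 : ℝ)) ∂μp
        ≤ ∫⁻ p, K0 * W p ^ (2 : ℝ) ∂μp := by
          refine lintegral_mono_ae (hae.mono fun p hp => ?_)
          have hWtop : W p ^ (2 : ℝ) ≠ ⊤ := by
            rw [hWdef]
            exact ENNReal.rpow_ne_top_of_nonneg (by norm_num) ENNReal.ofReal_ne_top
          calc ∫⁻ x in D, Kf x p * W p ^ (2 : ℝ)
              = (∫⁻ x in D, Kf x p) * W p ^ (2 : ℝ) := lintegral_mul_const' _ _ hWtop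
            _ ≤ K0 * W p ^ (2 : ℝ) := by
                apply mul_le_mul_left
                have h := hcol p.2 p.1 hp
                simpa using h
      _ = K0 * ∫⁻ p, W p ^ (2 : ℝ) ∂μp := lintegral_const_mul' _ _ hK0top
      _ ≤ K0 * (ENNReal.ofReal (2 * L ^ 2 * M) * S) := by
          apply mul_le_mul_right
          rw [hμpdef, lintegral_prod _ (hWm.pow measurable_const).aemeasurable]
          calc ∫⁻ z in Ioo v s, ∫⁻ y in D, W (z, y) ^ (2 : ℝ)
              ≤ ∫⁻ z in Ioo v s, ENNReal.ofReal (2 * L ^ 2 * M) * (1 + L2N D (u z) ^ 2) :=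
                lintegral_mono fun z => hW2 z
            _ = ENNReal.ofReal (2 * L ^ 2 * M) * ∫⁻ z in Ioo v s, (1 + L2N D (u z) ^ 2) :=
                lintegral_const_mul' _ _ ENNReal.ofReal_ne_top
            _ = ENNReal.ofReal (2 * L ^ 2 * M) * S := by rw [hSdef, hIoo]
  -- main L² estimate
  have hmain : ∫⁻ x in D,
      (‖∫ z in Ioc v s, ∫ y in D, G x s y z * f (u z y)‖₊ : ℝ≥0∞) ^ (2 : ℝ)
      ≤ (K0 * ENNReal.ofReal (s - v)) * (K0 * (ENNReal.ofReal (2 * L ^ 2 * M) * S)) := by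
    calc ∫⁻ x in D,
        (‖∫ z in Ioc v s, ∫ y in D, G x s y z * f (u z y)‖₊ : ℝ≥0∞) ^ (2 : ℝ)
        ≤ ∫⁻ x in D, (K0 * ENNReal.ofReal (s - v)) * (∫⁻ p, Kf x p * W p ^ (2 : ℝ) ∂μp) := by
          refine lintegral_mono_ae ((ae_restrict_iff' hDm).2
            (Filter.Eventually.of_forall fun x hx => ?_))
          have hcs := lintegral_cs μp (hKmx x).aemeasurable hWm.aemeasurable
          calc (‖∫ z in Ioc v s, ∫ y in D, G x s y z * f (u z y)‖₊ : ℝ≥0∞) ^ (2 : ℝ)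
              ≤ (∫⁻ p, Kf x p * W p ∂μp) ^ (2 : ℝ) :=
                ENNReal.rpow_le_rpow (hptw x hx) (by norm_num)
            _ ≤ ((∫⁻ p, Kf x p ∂μp) ^ (1 / 2 : ℝ) *
                  (∫⁻ p, Kf x p * W p ^ (2 : ℝ) ∂μp) ^ (1 / 2 : ℝ)) ^ (2 : ℝ) :=
                ENNReal.rpow_le_rpow hcs (by norm_num)
            _ = (∫⁻ p, Kf x p ∂μp) * (∫⁻ p, Kf x p * W p ^ (2 : ℝ) ∂μp) := by
                rw [ENNReal.mul_rpow_of_nonneg _ _ (by norm_num : (0:ℝ) ≤ 2),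
                  ← ENNReal.rpow_mul, ← ENNReal.rpow_mul]
                norm_num
            _ ≤ (K0 * ENNReal.ofReal (s - v)) * (∫⁻ p, Kf x p * W p ^ (2 : ℝ) ∂μp) :=
                mul_le_mul_left (hA x) _
      _ = (K0 * ENNReal.ofReal (s - v)) *
            ∫⁻ x in D, (∫⁻ p, Kf x p * W p ^ (2 : ℝ) ∂μp) :=
          lintegral_const_mul' _ _ (ENNReal.mul_ne_top hK0top ENNReal.ofReal_ne_top)
      _ ≤ (K0 * ENNReal.ofReal (s - v)) * (K0 * (ENNReal.ofReal (2 * L ^ 2 * M) * S)) :=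
          mul_le_mul_right hB _
  -- conclude
  have hLHS : L2N D (fun x => ∫ z in Ioc v s, ∫ y in D, G x s y z * f (u z y))
      = (∫⁻ x in D,
          (‖∫ z in Ioc v s, ∫ y in D, G x s y z * f (u z y)‖₊ : ℝ≥0∞) ^ (2 : ℝ)) ^ (1 / 2 : ℝ) := by
    rw [show L2N D (fun x => ∫ z in Ioc v s, ∫ y in D, G x s y z * f (u z y))
        = eLpNorm (fun x => ∫ z in Ioc v s, ∫ y in D, G x s y z * f (u z y)) 2
            (volume.restrict D) from rfl,
      eLpNorm_eq_lintegral_rpow_enorm_toReal (by norm_num) (by norm_num)]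
    simp only [ENNReal.toReal_ofNat, enorm_eq_nnnorm]
  rw [hLHS]
  calc (∫⁻ x in D,
        (‖∫ z in Ioc v s, ∫ y in D, G x s y z * f (u z y)‖₊ : ℝ≥0∞) ^ (2 : ℝ)) ^ (1 / 2 : ℝ)
      ≤ ((K0 * ENNReal.ofReal (s - v)) *
          (K0 * (ENNReal.ofReal (2 * L ^ 2 * M) * S))) ^ (1 / 2 : ℝ) :=
        ENNReal.rpow_le_rpow hmain (by norm_num)
    _ = (ENNReal.ofReal (Kr * (s - v) * Kr * (2 * L ^ 2 * M)) * S) ^ (1 / 2 : ℝ) := by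
        congr 1
        have hcomm : K0 * ENNReal.ofReal (s - v) * (K0 * (ENNReal.ofReal (2 * L ^ 2 * M) * S))
            = K0 * ENNReal.ofReal (s - v) * K0 * ENNReal.ofReal (2 * L ^ 2 * M) * S := by
          ring
        rw [hcomm]
        congr 1
        rw [hK0def, ← ENNReal.ofReal_mul hKr.le, ← ENNReal.ofReal_mul (by positivity),
          ← ENNReal.ofReal_mul (by positivity)]
    _ = ENNReal.ofReal ((Kr * Real.sqrt (2 * L ^ 2 * M)) * (s - v) ^ (1 / 2 : ℝ)) *
          S ^ (1 / 2 : ℝ) := by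
        rw [ENNReal.mul_rpow_of_nonneg _ _ (by norm_num : (0:ℝ) ≤ 1 / 2),
          ENNReal.ofReal_rpow_of_nonneg (by positivity) (by norm_num)]
        congr 2
        have h2 : Kr * (s - v) * Kr * (2 * L ^ 2 * M)
            = (Kr * Real.sqrt (2 * L ^ 2 * M)) ^ 2 * (s - v) := by
          rw [mul_pow, Real.sq_sqrt (by positivity)]; ring
        rw [h2, Real.mul_rpow (sq_nonneg _) hsv]
        congr 1
        rw [← Real.sqrt_eq_rpow, Real.sqrt_sq (by positivity)]
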